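/- Over propositional variables {q, p, p₁⁰,…,p_n⁰, p₁¹,…,p_n¹}, the 2^n formulas φ_ℓ = (p ∧ p₁^{ℓ₁} ∧ … ∧ p_n^{ℓ_n}) → q, indexed by binary strings ℓ ∈ {0,1}^n, are such that: (a) each φ_ℓ is entailed by p → q, and (b) no φ_ℓ is entailed by the conjunction of the others, i.e., for every ℓ, {φ_{ℓ'} : ℓ' ≠ ℓ} ⊭ φ_ℓ. -/
import Mathlib


/-- The propositional variables `q`, `p`, and `p_j^b` for `j < n`, `b ∈ {0,1}`. -/
inductive Var (n : ℕ) : Type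
  | q : Var n
  | p : Var n
  | pv (j : Fin n) (b : Bool) : Var n

/-- The formula `φ_ℓ = (p ∧ p₁^{ℓ₁} ∧ … ∧ p_n^{ℓ_n}) → q`, evaluated at a valuation `v`. -/
def phi {n : ℕ} (ℓ : Fin n → Bool) (v : Var n → Bool) : Prop :=
  (v Var.p = true ∧ ∀ j : Fin n, v (Var.pv j (ℓ j)) = true) → v Var.q = true

/-- (a) each `φ_ℓ` is entailed by `p → q`; (b) no `φ_ℓ` is entailed by the conjunction of
the others. -/
theorem phi_family_properties (n : ℕ) :
    (∀ (ℓ : Fin n → Bool) (v : Var n → Bool),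
      (v Var.p = true → v Var.q = true) → phi ℓ v) ∧
    (∀ ℓ : Fin n → Bool,
      ¬ (∀ v : Var n → Bool, (∀ ℓ' : Fin n → Bool, ℓ' ≠ ℓ → phi ℓ' v) → phi ℓ v)) := by
  constructor
  · intro ℓ v h hyp
    exact h hyp.1
  · intro ℓ h
    -- valuation: q ↦ false, p ↦ true, pv j b ↦ (b == ℓ j)
    have := h (fun x => match x with
      | Var.q => false
      | Var.p => true
      | Var.pv j b => b == ℓ j)
      (by
        intro ℓ' hne hyp
        exfalso
        apply hne
        funext j
        have := hyp.2 j
        simpa using this)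
    simp [phi] at this
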